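/- Let f : Finset (Fin n) → ℝ be a polymatroid rank function (normalized, monotone, submodular). For any 1 ≤ r ≤ n, the sum over all r-subsets J of {1,…,n} of (f(univ) - f(J)) is at most C(n-1, n-r-1) · f(univ), provided r < n. -/

import Mathlib

open Finset

private lemma han_tele {n : ℕ} (f : Finset (Fin n) → ℝ) (h0 : f ∅ = 0)
    (hsub : ∀ A B : Finset (Fin n), f (A ∪ B) + f (A ∩ B) ≤ f A + f B)
    (B : Finset (Fin n)) :
    ∑ i ∈ B, (f B - f (B.erase i)) ≤ f B := by
  induction B using Finset.induction_on with
  | empty => simp [h0]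
  | @insert a A ha ih =>
    rw [Finset.sum_insert ha, Finset.erase_insert ha]
    have hterm : ∀ i ∈ A, f (insert a A) - f ((insert a A).erase i)
        ≤ f A - f (A.erase i) := by
      intro i hi
      have hia : i ≠ a := by rintro rfl; exact ha hi
      have hE : (insert a A).erase i = insert a (A.erase i) :=
        Finset.erase_insert_of_ne hia.symm
      have h := hsub (insert a (A.erase i)) A
      have hU : insert a (A.erase i) ∪ A = insert a A := by
        rw [Finset.insert_union, Finset.union_eq_right.2 (Finset.erase_subset i A)]
      have hI : insert a (A.erase i) ∩ A = A.erase i := by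
        rw [Finset.insert_inter_of_notMem ha,
          Finset.inter_eq_left.2 (Finset.erase_subset i A)]
      rw [hU, hI] at h
      rw [hE]
      linarith
    have hsum : ∑ i ∈ A, (f (insert a A) - f ((insert a A).erase i))
        ≤ ∑ i ∈ A, (f A - f (A.erase i)) := Finset.sum_le_sum hterm
    linarith

private lemma han_double_count {n r : ℕ} (f : Finset (Fin n) → ℝ) :
    ∑ B ∈ powersetCard (r+1) (univ : Finset (Fin n)), ∑ i ∈ B, f (B.erase i)
      = ∑ J ∈ powersetCard r (univ : Finset (Fin n)), ((n - r : ℕ) : ℝ) * f J := by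
  have hrhs : ∀ J ∈ powersetCard r (univ : Finset (Fin n)),
      ((n - r : ℕ) : ℝ) * f J = ∑ _a ∈ (univ \ J), f J := by
    intro J hJ
    have hc : J.card = r := (Finset.mem_powersetCard_univ).1 hJ
    rw [Finset.sum_const, Finset.card_sdiff_of_subset (Finset.subset_univ J), Finset.card_univ,
      Fintype.card_fin, hc, nsmul_eq_mul]
  rw [Finset.sum_congr rfl hrhs, Finset.sum_sigma', Finset.sum_sigma']
  apply Finset.sum_nbij' (i := fun p => (⟨p.1.erase p.2, p.2⟩ :
      (_ : Finset (Fin n)) × Fin n))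
    (j := fun p => (⟨insert p.2 p.1, p.2⟩ : (_ : Finset (Fin n)) × Fin n))
  · intro p hp
    rw [Finset.mem_sigma] at hp ⊢
    obtain ⟨hp1, hp2⟩ := hp
    have hc : p.1.card = r + 1 := (Finset.mem_powersetCard_univ).1 hp1
    constructor
    · rw [Finset.mem_powersetCard_univ, Finset.card_erase_of_mem hp2, hc]
      omega
    · simp
  · intro p hp
    rw [Finset.mem_sigma] at hp ⊢
    obtain ⟨hp1, hp2⟩ := hp
    have hc : p.1.card = r := (Finset.mem_powersetCard_univ).1 hp1
    have hnm : p.2 ∉ p.1 := (Finset.mem_sdiff.1 hp2).2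
    constructor
    · rw [Finset.mem_powersetCard_univ, Finset.card_insert_of_notMem hnm, hc]
    · exact Finset.mem_insert_self _ _
  · intro p hp
    rw [Finset.mem_sigma] at hp
    exact Sigma.ext (Finset.insert_erase hp.2) (by simp)
  · intro p hp
    rw [Finset.mem_sigma] at hp
    have hnm : p.2 ∉ p.1 := (Finset.mem_sdiff.1 hp.2).2
    exact Sigma.ext (Finset.erase_insert hnm) (by simp)
  · intro p _
    rfl

private lemma han_main {n : ℕ} (f : Finset (Fin n) → ℝ)
    (h0 : f ∅ = 0)
    (hmono : ∀ A B : Finset (Fin n), A ⊆ B → f A ≤ f B)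
    (hsub : ∀ A B : Finset (Fin n), f (A ∪ B) + f (A ∩ B) ≤ f A + f B) :
    ∀ d r, r + d = n →
      ((r * n.choose r : ℕ) : ℝ) * f univ
        ≤ (n : ℝ) * ∑ J ∈ powersetCard r (univ : Finset (Fin n)), f J := by
  have hx : 0 ≤ f univ := by
    have := hmono ∅ univ (Finset.empty_subset _)
    linarith [this, h0.le, h0.ge]
  intro d
  induction d with
  | zero =>
    intro r hr
    have hrn : r = n := by omega
    subst hrn
    have hP : powersetCard r (univ : Finset (Fin r)) = {univ} := by
      have := Finset.powersetCard_self (univ : Finset (Fin r))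
      rwa [Finset.card_univ, Fintype.card_fin] at this
    rw [hP, Finset.sum_singleton, Nat.choose_self, mul_one]
  | succ d ih =>
    intro r hr
    have hr' : (r + 1) + d = n := by omega
    have hlt : r < n := by omega
    have h1 := ih (r + 1) hr'
    -- step: r * S_{r+1} ≤ (n-r) * S_r
    have hB : ∀ B ∈ powersetCard (r+1) (univ : Finset (Fin n)),
        (r : ℝ) * f B ≤ ∑ i ∈ B, f (B.erase i) := by
      intro B hBm
      have hc : B.card = r + 1 := (Finset.mem_powersetCard_univ).1 hBm
      have ht := han_tele f h0 hsub B
      rw [Finset.sum_sub_distrib, Finset.sum_const, hc, nsmul_eq_mul] at ht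
      push_cast at ht
      linarith
    have hstep : (r : ℝ) * ∑ B ∈ powersetCard (r+1) (univ : Finset (Fin n)), f B
        ≤ ((n - r : ℕ) : ℝ) * ∑ J ∈ powersetCard r (univ : Finset (Fin n)), f J := by
      rw [Finset.mul_sum, Finset.mul_sum]
      calc ∑ B ∈ powersetCard (r+1) (univ : Finset (Fin n)), (r : ℝ) * f B
          ≤ ∑ B ∈ powersetCard (r+1) (univ : Finset (Fin n)), ∑ i ∈ B, f (B.erase i) :=
            Finset.sum_le_sum hB
        _ = ∑ J ∈ powersetCard r (univ : Finset (Fin n)), ((n - r : ℕ) : ℝ) * f J :=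
            han_double_count f
    set S := ∑ J ∈ powersetCard r (univ : Finset (Fin n)), f J with hS
    set T := ∑ B ∈ powersetCard (r+1) (univ : Finset (Fin n)), f B with hT
    set m : ℕ := n - r with hm
    have hmpos : 0 < m := by omega
    have hid : (r + 1) * n.choose (r + 1) = m * n.choose r := by
      rw [mul_comm, Nat.choose_succ_right_eq, mul_comm]
    have hidR : ((r : ℝ) + 1) * (n.choose (r + 1) : ℝ) = (m : ℝ) * (n.choose r : ℝ) := by
      exact_mod_cast congrArg (Nat.cast : ℕ → ℝ) hid
    push_cast at h1 ⊢
    have key1 : (r : ℝ) * (((r : ℝ) + 1) * (n.choose (r+1) : ℝ) * f univ)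
        ≤ (r : ℝ) * ((n : ℝ) * T) :=
      mul_le_mul_of_nonneg_left h1 (by positivity)
    have key2 : (n : ℝ) * ((r : ℝ) * T) ≤ (n : ℝ) * ((m : ℝ) * S) :=
      mul_le_mul_of_nonneg_left hstep (by positivity)
    rw [hidR] at key1
    have hfin : (m : ℝ) * ((r : ℝ) * (n.choose r : ℝ) * f univ)
        ≤ (m : ℝ) * ((n : ℝ) * S) := by nlinarith [key1, key2]
    have hmR : (0 : ℝ) < (m : ℝ) := by exact_mod_cast hmpos
    have := (mul_le_mul_iff_right₀ hmR).1 hfin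
    linarith

theorem han_sum_bound {n : ℕ} (f : Finset (Fin n) → ℝ)
    (h0 : f ∅ = 0)
    (hmono : ∀ A B : Finset (Fin n), A ⊆ B → f A ≤ f B)
    (hsub : ∀ A B : Finset (Fin n), f (A ∪ B) + f (A ∩ B) ≤ f A + f B)
    (r : ℕ) (h1 : 1 ≤ r) (h2 : r < n) :
    ∑ J ∈ powersetCard r (univ : Finset (Fin n)), (f univ - f J) ≤
      (((n - 1).choose (n - r - 1) : ℕ) : ℝ) * f univ := by
  have key := han_main f h0 hmono hsub (n - r) r (by omega)
  set S := ∑ J ∈ powersetCard r (univ : Finset (Fin n)), f J with hS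
  have hcard : (powersetCard r (univ : Finset (Fin n))).card = n.choose r := by
    rw [Finset.card_powersetCard, Finset.card_univ, Fintype.card_fin]
  have hsum : ∑ J ∈ powersetCard r (univ : Finset (Fin n)), (f univ - f J)
      = (n.choose r : ℝ) * f univ - S := by
    rw [Finset.sum_sub_distrib, Finset.sum_const, hcard, nsmul_eq_mul]
  rw [hsum]
  -- nat identity: (n - r) * C(n,r) = n * C(n-1, n-r-1)
  have hsym : (n - 1).choose (n - r - 1) = (n - 1).choose r := by
    have h := Nat.choose_symm (show n - r - 1 ≤ n - 1 by omega)
    rw [show n - 1 - (n - r - 1) = r by omega] at h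
    exact h.symm
  have hid : (n - r) * n.choose r = n * (n - 1).choose (n - r - 1) := by
    rw [hsym]
    have h2' : n * (n - 1).choose r = n.choose (r + 1) * (r + 1) := by
      have := Nat.add_one_mul_choose_eq (n - 1) r
      rwa [Nat.sub_add_cancel (by omega)] at this
    rw [h2', Nat.choose_succ_right_eq, mul_comm]
  have hnpos : (0 : ℝ) < (n : ℝ) := by exact_mod_cast (by omega : 0 < n)
  have hidR : ((n : ℝ) - (r : ℝ)) * (n.choose r : ℝ)
      = (n : ℝ) * ((n - 1).choose (n - r - 1) : ℝ) := by
    have := congrArg (Nat.cast : ℕ → ℝ) hid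
    push_cast [Nat.cast_sub h2.le] at this
    linarith
  have hidf : ((n : ℝ) - (r : ℝ)) * (n.choose r : ℝ) * f univ
      = (n : ℝ) * ((n - 1).choose (n - r - 1) : ℝ) * f univ := by
    rw [hidR]
  have keyR : (r : ℝ) * (n.choose r : ℝ) * f univ ≤ (n : ℝ) * S := by
    push_cast at key; linarith
  have hmul : (n : ℝ) * ((n.choose r : ℝ) * f univ - S)
      ≤ (n : ℝ) * ((((n - 1).choose (n - r - 1) : ℕ) : ℝ) * f univ) := by
    have e1 : (n : ℝ) * ((n.choose r : ℝ) * f univ - S)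
        = (n : ℝ) * (n.choose r : ℝ) * f univ - (n : ℝ) * S := by ring
    have e2 : (n : ℝ) * ((((n - 1).choose (n - r - 1) : ℕ) : ℝ) * f univ)
        = (n : ℝ) * ((n - 1).choose (n - r - 1) : ℝ) * f univ := by ring
    have e3 : ((n : ℝ) - (r : ℝ)) * (n.choose r : ℝ) * f univ
        = (n : ℝ) * (n.choose r : ℝ) * f univ - (r : ℝ) * (n.choose r : ℝ) * f univ := by
      ring
    rw [e1, e2]
    linarith [hidf, keyR, e3]
  exact (mul_le_mul_iff_right₀ hnpos).1 hmul
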